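/- arXiv:1604.03714 — 2 statements merged into one kernel-verified Lean document; each statement's English description precedes it below -/
import Mathlib

section
/- Let α_i, β_i ∈ ℝ³ be linearly independent, let k_α, k_β, l_α, l_β > 0 and c_ω ≥ 0. Then the origin of the error system is locally exponentially stable: there exist δ > 0, C > 0 and λ > 0 such that for every t₀ ∈ ℝ, every continuous Ω : ℝ → ℝ³ with ‖Ω(t)‖ ≤ c_ω for all t, and every solution E of the error system on [t₀, ∞) with ‖E(t₀)‖ ≤ δ, one has ‖E(t)‖ ≤ C e^{−λ(t−t₀)} ‖E(t₀)‖ for all t ≥ t₀. -/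
open scoped RealInnerProductSpace
open Matrix Filter

noncomputable section

/-- ℝ³ with the Euclidean norm and inner product. -/
abbrev V3 : Type := EuclideanSpace ℝ (Fin 3)

/-- Identity identification of `V3` with plain functions `Fin 3 → ℝ`. -/
def toF (v : V3) : Fin 3 → ℝ := v

/-- Identity identification of plain functions `Fin 3 → ℝ` with `V3`. -/
def toE (v : Fin 3 → ℝ) : V3 := WithLp.toLp 2 v

/-- The cross product on ℝ³. -/
def cross (v w : V3) : V3 := toE (crossProduct (toF v) (toF w))

/-- `(Eα, Eβ, Eb)` is a solution on `[t₀, ∞)` of the error system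
`Ėα = Eb × (αi + Eα) − kα Eα`, `Ėβ = Eb × (βi + Eβ) − kβ Eβ`,
`Ėb = Ω × Eb + lα Eα × αi + lβ Eβ × βi`. -/
def IsSolution (αi βi : V3) (kα kβ lα lβ : ℝ) (Ω : ℝ → V3) (t₀ : ℝ)
    (Eα Eβ Eb : ℝ → V3) : Prop :=
  ∀ t ∈ Set.Ici t₀,
    HasDerivWithinAt Eα (cross (Eb t) (αi + Eα t) - kα • Eα t) (Set.Ici t₀) t ∧
    HasDerivWithinAt Eβ (cross (Eb t) (βi + Eβ t) - kβ • Eβ t) (Set.Ici t₀) t ∧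
    HasDerivWithinAt Eb
      (cross (Ω t) (Eb t) + lα • cross (Eα t) αi + lβ • cross (Eβ t) βi) (Set.Ici t₀) t

/-- The Euclidean norm of a state `(Eα, Eβ, Eb) ∈ ℝ³ × ℝ³ × ℝ³`. -/
def stateNorm (Eα Eβ Eb : V3) : ℝ := Real.sqrt (‖Eα‖ ^ 2 + ‖Eβ‖ ^ 2 + ‖Eb‖ ^ 2)

/-! ### Auxiliary lemmas -/

lemma crossE_apply (v w : V3) (i : Fin 3) : cross v w i =
    ![v 1 * w 2 - v 2 * w 1, v 2 * w 0 - v 0 * w 2, v 0 * w 1 - v 1 * w 0] i := by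
  simp [cross, toE, toF, crossProduct]

lemma inner_expand (v w : V3) : ⟪v, w⟫ = v 0 * w 0 + v 1 * w 1 + v 2 * w 2 := by
  simp [PiLp.inner_apply, Fin.sum_univ_three, mul_comm]

lemma normsq_expand (v : V3) : ‖v‖^2 = v 0 ^2 + v 1 ^2 + v 2 ^2 := by
  rw [← real_inner_self_eq_norm_sq, inner_expand]; ring

lemma lagrange (u v : V3) : ‖cross u v‖^2 = ‖u‖^2*‖v‖^2 - ⟪u,v⟫^2 := by
  simp only [normsq_expand, crossE_apply, inner_expand]
  norm_num [Matrix.cons_val_zero, Matrix.cons_val_one, Matrix.cons_val_two, Matrix.tail_cons, Matrix.head_cons]; ring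

lemma cross_add_left (u v w : V3) : cross (u + v) w = cross u w + cross v w := by
  ext i; fin_cases i <;>
    simp [crossE_apply, Matrix.cons_val_zero, Matrix.cons_val_one, Matrix.head_cons] <;> ring

lemma cross_add_right (u v w : V3) : cross u (v + w) = cross u v + cross u w := by
  ext i; fin_cases i <;>
    simp [crossE_apply, Matrix.cons_val_zero, Matrix.cons_val_one, Matrix.head_cons] <;> ring

lemma cross_smul_left (r : ℝ) (u v : V3) : cross (r • u) v = r • cross u v := by
  ext i; fin_cases i <;>
    simp [crossE_apply, Matrix.cons_val_zero, Matrix.cons_val_one, Matrix.head_cons] <;> ring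

lemma norm_cross_le (u v : V3) : ‖cross u v‖ ≤ ‖u‖ * ‖v‖ := by
  have h1 : ‖cross u v‖^2 ≤ (‖u‖ * ‖v‖)^2 := by
    rw [lagrange, mul_pow]; nlinarith [sq_nonneg (⟪u,v⟫)]
  have h2 : 0 ≤ ‖u‖ * ‖v‖ := by positivity
  nlinarith [norm_nonneg (cross u v)]

lemma inner_ge (u v : V3) : -(‖u‖ * ‖v‖) ≤ ⟪u, v⟫ :=
  (abs_le.1 (abs_real_inner_le_norm u v)).1

/-- cross with fixed right argument, as a continuous linear map. -/
def crossRL (α : V3) : V3 →L[ℝ] V3 := LinearMap.toContinuousLinearMap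
  { toFun := fun v => cross v α
    map_add' := fun u v => cross_add_left u v α
    map_smul' := fun r v => cross_smul_left r v α }

lemma crossRL_apply (α v : V3) : crossRL α v = cross v α := rfl

lemma coercivity (αi βi : V3) (hind : LinearIndependent ℝ ![αi, βi])
    (lα lβ : ℝ) (hlα : 0 < lα) (hlβ : 0 < lβ) :
    ∃ c0 > (0:ℝ), ∀ c : V3, c0 * ‖c‖^2 ≤ lα*‖cross c αi‖^2 + lβ*‖cross c βi‖^2 := by
  set f : V3 → ℝ := fun c => lα*‖cross c αi‖^2 + lβ*‖cross c βi‖^2 with hf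
  have hcont : Continuous f := by
    have h1 : Continuous fun c : V3 => cross c αi := (crossRL αi).continuous
    have h2 : Continuous fun c : V3 => cross c βi := (crossRL βi).continuous
    fun_prop
  obtain ⟨c₁, hc₁s, hc₁min⟩ := (isCompact_sphere (0:V3) 1).exists_isMinOn
    (NormedSpace.sphere_nonempty.2 zero_le_one) hcont.continuousOn
  have hc₁norm : ‖c₁‖ = 1 := by simpa using mem_sphere_zero_iff_norm.1 hc₁s
  have hfpos : 0 < f c₁ := by
    rcases lt_or_ge 0 (f c₁) with h | h
    · exact h
    exfalso
    have h1 : (0:ℝ) ≤ lα*‖cross c₁ αi‖^2 := by positivity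
    have h2 : (0:ℝ) ≤ lβ*‖cross c₁ βi‖^2 := by positivity
    have hα : cross c₁ αi = 0 := by
      have h3 : lα*‖cross c₁ αi‖^2 = 0 := by simp only [hf] at h; linarith
      have h4 : ‖cross c₁ αi‖^2 = 0 := (mul_eq_zero.1 h3).resolve_left hlα.ne'
      simpa using pow_eq_zero_iff two_ne_zero |>.1 h4
    have hβ : cross c₁ βi = 0 := by
      have h3 : lβ*‖cross c₁ βi‖^2 = 0 := by simp only [hf] at h; linarith
      have h4 : ‖cross c₁ βi‖^2 = 0 := (mul_eq_zero.1 h3).resolve_left hlβ.ne'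
      simpa using pow_eq_zero_iff two_ne_zero |>.1 h4
    have collinear : ∀ v : V3, cross c₁ v = 0 → v = ⟪c₁, v⟫ • c₁ := by
      intro v hv
      have hL : ‖c₁‖^2*‖v‖^2 - ⟪c₁,v⟫^2 = 0 := by rw [← lagrange, hv]; simp
      rw [hc₁norm] at hL
      have hz2 : ‖v - ⟪c₁, v⟫ • c₁‖^2 = 0 := by
        have hcomm : ⟪c₁, v⟫ = ⟪v, c₁⟫ := real_inner_comm v c₁
        rw [norm_sub_sq_real, real_inner_smul_right, norm_smul]
        rw [mul_pow, hc₁norm, Real.norm_eq_abs, sq_abs]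
        rw [← hcomm]; linarith [hL]
      have hz : ‖v - ⟪c₁, v⟫ • c₁‖ = 0 := pow_eq_zero_iff two_ne_zero |>.1 hz2
      exact sub_eq_zero.1 (norm_eq_zero.1 hz)
    have hα' := collinear αi hα
    have hβ' := collinear βi hβ
    rw [linearIndependent_fin2] at hind
    obtain ⟨hβne, hnm⟩ := hind
    simp only [Matrix.cons_val_one, Matrix.head_cons, Matrix.cons_val_zero] at hβne hnm
    set rα := ⟪c₁, αi⟫ with hrαdef
    set rβ := ⟪c₁, βi⟫ with hrβdef
    have hrβ : rβ ≠ 0 := by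
      intro h'; rw [h'] at hβ'; simp at hβ'; exact hβne hβ'
    apply hnm (rα / rβ)
    rw [hβ', smul_smul, div_mul_cancel₀ _ hrβ, ← hα']
  refine ⟨f c₁, hfpos, fun c => ?_⟩
  rcases eq_or_ne c 0 with rfl | hc
  · simp [hf, cross, toE, toF]
  · have hnc : 0 < ‖c‖ := norm_pos_iff.2 hc
    have hmem : (‖c‖⁻¹ • c) ∈ Metric.sphere (0:V3) 1 := by
      simp [norm_smul, abs_of_pos (inv_pos.2 hnc), inv_mul_cancel₀ hnc.ne']
    have hmin : f c₁ ≤ f (‖c‖⁻¹ • c) := hc₁min hmem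
    have hscale : f (‖c‖⁻¹ • c) = (‖c‖⁻¹)^2 * f c := by
      simp only [hf, cross_smul_left, norm_smul]
      rw [Real.norm_eq_abs, abs_of_pos (inv_pos.2 hnc)]
      ring
    rw [hscale] at hmin
    have key : f c₁ * ‖c‖^2 ≤ f c := by
      calc f c₁ * ‖c‖^2 ≤ ((‖c‖⁻¹)^2 * f c) * ‖c‖^2 := by nlinarith [sq_nonneg ‖c‖]
        _ = f c := by field_simp
    simpa [hf] using key

lemma Vd_identity (αi βi a b c ω : V3) (kα kβ lα lβ : ℝ) :
    lα*(⟪a, cross c (αi+a) - kα•a⟫ + ⟪cross c (αi+a) - kα•a, a⟫)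
    + lβ*(⟪b, cross c (βi+b) - kβ•b⟫ + ⟪cross c (βi+b) - kβ•b, b⟫)
    + (⟪c, cross ω c + lα•cross a αi + lβ•cross b βi⟫
        + ⟪cross ω c + lα•cross a αi + lβ•cross b βi, c⟫)
    = -(2*lα*kα*‖a‖^2) - 2*lβ*kβ*‖b‖^2 := by
  simp only [inner_expand, normsq_expand, PiLp.sub_apply, PiLp.add_apply, PiLp.smul_apply,
    crossE_apply, smul_eq_mul]
  norm_num [Matrix.cons_val_zero, Matrix.cons_val_one, Matrix.cons_val_two, Matrix.tail_cons, Matrix.head_cons]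
  ring


-- Scalar form of the Sd lower bound; everything reduced to linear arithmetic
lemma sdlow_scalar (kα kβ lα lβ cω A B K x y z I1 I2 I3 I4 : ℝ)
    (hkα : 0 < kα) (hkβ : 0 < kβ) (hlα : 0 < lα) (hlβ : 0 < lβ) (hcω : 0 ≤ cω)
    (hA : 0 ≤ A) (hB : 0 ≤ B)
    (hx0 : 0 ≤ x) (hy0 : 0 ≤ y) (hz0 : 0 ≤ z) (hz1 : z ≤ 1)
    (hK : K = lα*A*(1+kα+cω) + lβ*B*(1+kβ+cω) + lα^2*A^2 + lβ^2*B^2 + lα*lβ*A*B + 1)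
    (g1 : -(x*((cω*z + lα*(x*A) + lβ*(y*B))*A)) ≤ I1)
    (g2 : -((z*x + kα*x)*(z*A)) ≤ I2)
    (g3 : -(y*((cω*z + lα*(x*A) + lβ*(y*B))*B)) ≤ I3)
    (g4 : -((z*y + kβ*y)*(z*B)) ≤ I4) :
    -(K*(x*z + y*z) + K*(x^2+y^2)) ≤ lα*(I1 + I2) + lβ*(I3 + I4) := by
  have hg1 := mul_le_mul_of_nonneg_left g1 hlα.le
  have hg2 := mul_le_mul_of_nonneg_left g2 hlα.le
  have hg3 := mul_le_mul_of_nonneg_left g3 hlβ.le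
  have hg4 := mul_le_mul_of_nonneg_left g4 hlβ.le
  have c3 : 0 ≤ 1 - z := by linarith
  have fz1 : 0 ≤ (lα*A*(x*z))*(1-z) := by positivity
  have fz2 : 0 ≤ (lα*kα*A*(x*z))*(1-z) := by positivity
  have fz3 : 0 ≤ (lβ*B*(y*z))*(1-z) := by positivity
  have fz4 : 0 ≤ (lβ*kβ*B*(y*z))*(1-z) := by positivity
  have fxy : 0 ≤ (lα*lβ*A*B)*(x-y)^2 := by positivity
  have hKt1 : (0:ℝ) ≤ lα*A*(1+kα+cω) := by positivity
  have hKt2 : (0:ℝ) ≤ lβ*B*(1+kβ+cω) := by positivity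
  have hKt3 : (0:ℝ) ≤ lα^2*A^2 := by positivity
  have hKt4 : (0:ℝ) ≤ lβ^2*B^2 := by positivity
  have hKt5 : (0:ℝ) ≤ lα*lβ*A*B := by positivity
  have m1 : 0 ≤ x*z := by positivity
  have m2 : 0 ≤ y*z := by positivity
  have m3 : 0 ≤ x^2 := sq_nonneg x
  have m4 : 0 ≤ y^2 := sq_nonneg y
  have p11 := mul_nonneg hKt2 m1
  have p12 := mul_nonneg hKt3 m1
  have p13 := mul_nonneg hKt4 m1
  have p14 := mul_nonneg hKt5 m1
  have p21 := mul_nonneg hKt1 m2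
  have p22 := mul_nonneg hKt3 m2
  have p23 := mul_nonneg hKt4 m2
  have p24 := mul_nonneg hKt5 m2
  have p31 := mul_nonneg hKt1 m3
  have p32 := mul_nonneg hKt2 m3
  have p33 := mul_nonneg hKt4 m3
  have p41 := mul_nonneg hKt1 m4
  have p42 := mul_nonneg hKt2 m4
  have p43 := mul_nonneg hKt3 m4
  subst hK
  linarith [hg1, hg2, hg3, hg4, fz1, fz2, fz3, fz4, fxy,
    p11, p12, p13, p14, p21, p22, p23, p24, p31, p32, p33, p41, p42, p43, m1, m2, m3, m4]

-- Scalar form of the Wd decay bound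
lemma wd_scalar (lα lβ kα kβ c0 K ε μ x y z P D : ℝ)
    (hc0 : 0 < c0) (hK0 : 0 < K) (hε : 0 < ε)
    (hεa1 : ε*(c0*K + K^2 + 1) ≤ c0*(lα*kα)) (hεa2 : ε*(c0*K + K^2 + 1) ≤ c0*(lβ*kβ))
    (hμ1 : μ ≤ lα*kα) (hμ2 : μ ≤ lβ*kβ) (hμ3 : μ ≤ ε*c0/2)
    (hx0 : 0 ≤ x) (hy0 : 0 ≤ y) (hz0 : 0 ≤ z)
    (hP : c0*z^2 ≤ P)
    (hSd : P - (K*(x*z + y*z) + K*(x^2+y^2)) ≤ D) :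
    -(2*lα*kα*x^2) - 2*lβ*kβ*y^2 - ε*D ≤ -μ*(x^2+y^2+z^2) := by
  have F1 := mul_le_mul_of_nonneg_left hSd hε.le
  have F2 := mul_le_mul_of_nonneg_left hP hε.le
  have hT1 : -(2*lα*kα*x^2) - 2*lβ*kβ*y^2 - ε*D
      ≤ -(2*lα*kα*x^2) - 2*lβ*kβ*y^2 - ε*(c0*z^2)
        + ε*(K*(x*z+y*z)) + ε*(K*(x^2+y^2)) := by nlinarith [F1, F2]
  have F3 : 0 ≤ ε*(2*K*x - c0*z)^2 := by positivity
  have F4 : 0 ≤ ε*(2*K*y - c0*z)^2 := by positivity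
  have F5 := mul_le_mul_of_nonneg_right hεa1 (sq_nonneg x)
  have F6 := mul_le_mul_of_nonneg_right hεa2 (sq_nonneg y)
  have F7 := mul_le_mul_of_nonneg_right hμ1 (sq_nonneg x)
  have F8 := mul_le_mul_of_nonneg_right hμ2 (sq_nonneg y)
  have F9 := mul_le_mul_of_nonneg_right hμ3 (sq_nonneg z)
  nlinarith [hT1, F3, F4, F5, F6, F7, F8, F9, hc0, hε, sq_nonneg x, sq_nonneg y, sq_nonneg z]

lemma gronwall_ray {f f' : ℝ → ℝ} {K a : ℝ}
    (hf : ∀ t ∈ Set.Ici a, HasDerivWithinAt f (f' t) (Set.Ici a) t)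
    (bound : ∀ t ∈ Set.Ici a, f' t ≤ K * f t) :
    ∀ t ∈ Set.Ici a, f t ≤ f a * Real.exp (K * (t - a)) := by
  intro t ht
  have h := le_gronwallBound_of_liminf_deriv_right_le (f := f) (f' := f') (δ := f a)
    (K := K) (ε := 0) (a := a) (b := t)
    (fun x hx => ((hf x hx.1).continuousWithinAt).mono Set.Icc_subset_Ici_self)
    (fun x hx r hr => ((hf x hx.1).mono (Set.Ici_subset_Ici.2 hx.1)).liminf_right_slope_le hr)
    le_rfl
    (fun x hx => by simpa using bound x hx.1)
    t ⟨ht, le_rfl⟩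
  rwa [gronwallBound_ε0] at h

set_option maxHeartbeats 3200000 in
/-- The origin of the error system is locally exponentially stable. -/
theorem error_system_local_exponential_stability
    (αi βi : V3) (hind : LinearIndependent ℝ ![αi, βi])
    (kα kβ lα lβ : ℝ) (hkα : 0 < kα) (hkβ : 0 < kβ) (hlα : 0 < lα) (hlβ : 0 < lβ)
    (cω : ℝ) (hcω : 0 ≤ cω) :
    ∃ δ > (0 : ℝ), ∃ C > (0 : ℝ), ∃ lam > (0 : ℝ),
      ∀ (t₀ : ℝ) (Ω : ℝ → V3), Continuous Ω → (∀ t, ‖Ω t‖ ≤ cω) →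
        ∀ Eα Eβ Eb : ℝ → V3, IsSolution αi βi kα kβ lα lβ Ω t₀ Eα Eβ Eb →
          stateNorm (Eα t₀) (Eβ t₀) (Eb t₀) ≤ δ →
          ∀ t ≥ t₀, stateNorm (Eα t) (Eβ t) (Eb t)
            ≤ C * Real.exp (-lam * (t - t₀)) * stateNorm (Eα t₀) (Eβ t₀) (Eb t₀) := by
  obtain ⟨c0, hc0, hc0b⟩ := coercivity αi βi hind lα lβ hlα hlβ
  have hA : (0:ℝ) ≤ ‖αi‖ := norm_nonneg _
  have hB : (0:ℝ) ≤ ‖βi‖ := norm_nonneg _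
  set K : ℝ := lα*‖αi‖*(1+kα+cω) + lβ*‖βi‖*(1+kβ+cω) + lα^2*‖αi‖^2 + lβ^2*‖βi‖^2
      + lα*lβ*‖αi‖*‖βi‖ + 1 with hK_def
  have hKt1 : (0:ℝ) ≤ lα*‖αi‖*(1+kα+cω) :=
    mul_nonneg (mul_nonneg hlα.le hA) (by linarith)
  have hKt2 : (0:ℝ) ≤ lβ*‖βi‖*(1+kβ+cω) :=
    mul_nonneg (mul_nonneg hlβ.le hB) (by linarith)
  have hKt3 : (0:ℝ) ≤ lα^2*‖αi‖^2 := by positivity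
  have hKt4 : (0:ℝ) ≤ lβ^2*‖βi‖^2 := by positivity
  have hKt5 : (0:ℝ) ≤ lα*lβ*‖αi‖*‖βi‖ :=
    mul_nonneg (mul_nonneg (mul_nonneg hlα.le hlβ.le) hA) hB
  have hK1 : (1:ℝ) ≤ K := by rw [hK_def]; linarith
  have hK0 : (0:ℝ) < K := by linarith
  set mn : ℝ := min (lα*kα) (lβ*kβ) with hmn_def
  have hmn : 0 < mn := lt_min (mul_pos hlα hkα) (mul_pos hlβ hkβ)
  set m : ℝ := min (min lα lβ) 1 with hm_def
  have hm : 0 < m := lt_min (lt_min hlα hlβ) one_pos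
  have hmlα : m ≤ lα := (min_le_left _ _).trans (min_le_left _ _)
  have hmlβ : m ≤ lβ := (min_le_left _ _).trans (min_le_right _ _)
  have hm1 : m ≤ 1 := min_le_right _ _
  set M2 : ℝ := max (max lα lβ) 1 with hM2_def
  have hM2lα : lα ≤ M2 := (le_max_left _ _).trans (le_max_left _ _)
  have hM2lβ : lβ ≤ M2 := (le_max_right _ _).trans (le_max_left _ _)
  have hM21 : (1:ℝ) ≤ M2 := le_max_right _ _
  have hM2 : (0:ℝ) < M2 := by linarith
  set M : ℝ := lα*‖αi‖ + lβ*‖βi‖ + 1 with hM_def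
  have hM : (0:ℝ) < M := by
    have h1 := mul_nonneg hlα.le hA; have h2 := mul_nonneg hlβ.le hB
    rw [hM_def]; linarith
  have hden : (0:ℝ) < c0*K + K^2 + 1 := by positivity
  set ε : ℝ := min ((c0*mn)/(c0*K + K^2 + 1)) (m/(2*M)) with hε_def
  have hε : 0 < ε := lt_min (div_pos (mul_pos hc0 hmn) hden) (div_pos hm (by linarith))
  have hεa : ε*(c0*K + K^2 + 1) ≤ c0*mn := (le_div_iff₀ hden).1 (min_le_left _ _)
  have hεM : ε*(2*M) ≤ m := (le_div_iff₀ (by linarith : (0:ℝ) < 2*M)).1 (min_le_right _ _)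
  have hεa1 : ε*(c0*K + K^2 + 1) ≤ c0*(lα*kα) :=
    hεa.trans (mul_le_mul_of_nonneg_left (min_le_left _ _) hc0.le)
  have hεa2 : ε*(c0*K + K^2 + 1) ≤ c0*(lβ*kβ) :=
    hεa.trans (mul_le_mul_of_nonneg_left (min_le_right _ _) hc0.le)
  set μ : ℝ := min mn (ε*c0/2) with hμ_def
  have hμ : 0 < μ := lt_min hmn (by positivity)
  have hμ1 : μ ≤ lα*kα := (min_le_left _ _).trans (min_le_left _ _)
  have hμ2 : μ ≤ lβ*kβ := (min_le_left _ _).trans (min_le_right _ _)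
  have hμ3 : μ ≤ ε*c0/2 := min_le_right _ _
  set a1 : ℝ := m/2 with ha1_def
  set a2 : ℝ := M2 + m/2 with ha2_def
  have ha1 : 0 < a1 := by rw [ha1_def]; linarith
  have ha2 : 0 < a2 := by rw [ha2_def]; linarith
  set K2 : ℝ := μ/a2 with hK2_def
  have hK2 : 0 < K2 := div_pos hμ ha2
  refine ⟨Real.sqrt (m/M2), Real.sqrt_pos.2 (div_pos hm hM2),
    Real.sqrt (a2/a1), Real.sqrt_pos.2 (div_pos ha2 ha1),
    K2/2, half_pos hK2, ?_⟩
  intro t₀ Ω hΩc hΩb Eα Eβ Eb hsol hinit t ht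
  simp only [stateNorm] at hinit ⊢
  set N : ℝ → ℝ := fun s => ‖Eα s‖^2 + ‖Eβ s‖^2 + ‖Eb s‖^2 with hN_def
  have hN0 : ∀ s, 0 ≤ N s := fun s => by rw [hN_def]; positivity
  have hNt : ‖Eα t‖^2 + ‖Eβ t‖^2 + ‖Eb t‖^2 = N t := by rw [hN_def]
  have hNt0 : ‖Eα t₀‖^2 + ‖Eβ t₀‖^2 + ‖Eb t₀‖^2 = N t₀ := by rw [hN_def]
  rw [hNt, hNt0]
  rw [hNt0] at hinit
  set c' : ℝ → V3 := fun s => cross (Ω s) (Eb s) + lα • cross (Eα s) αi + lβ • cross (Eβ s) βi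
    with hc'_def
  set Sf : ℝ → ℝ := fun s => lα*⟪Eα s, cross (Eb s) αi⟫ + lβ*⟪Eβ s, cross (Eb s) βi⟫
    with hSf_def
  set Sd : ℝ → ℝ := fun s =>
      lα*(⟪Eα s, cross (c' s) αi⟫ + ⟪cross (Eb s) (αi + Eα s) - kα • Eα s, cross (Eb s) αi⟫)
    + lβ*(⟪Eβ s, cross (c' s) βi⟫ + ⟪cross (Eb s) (βi + Eβ s) - kβ • Eβ s, cross (Eb s) βi⟫)
    with hSd_def
  set Vf : ℝ → ℝ := fun s => lα*‖Eα s‖^2 + lβ*‖Eβ s‖^2 + ‖Eb s‖^2 with hVf_def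
  set Vd : ℝ → ℝ := fun s => -(2*lα*kα*‖Eα s‖^2) - 2*lβ*kβ*‖Eβ s‖^2 with hVd_def
  set Wf : ℝ → ℝ := fun s => Vf s - ε * Sf s with hWf_def
  set Wd : ℝ → ℝ := fun s => Vd s - ε * Sd s with hWd_def
  clear_value Wd Wf Vd Vf Sd Sf c' N K2 a2 a1 μ ε M M2 m mn K
  -- derivatives
  have hVder : ∀ s ∈ Set.Ici t₀, HasDerivWithinAt Vf (Vd s) (Set.Ici t₀) s := by
    intro s hs
    obtain ⟨ha, hb, hc⟩ := hsol s hs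
    have h1 := (ha.inner ℝ ha).const_mul lα
    have h2 := (hb.inner ℝ hb).const_mul lβ
    have h3 := hc.inner ℝ hc
    have hsum := (h1.add h2).add h3
    have heq : Vf = fun u => lα*⟪Eα u, Eα u⟫ + lβ*⟪Eβ u, Eβ u⟫ + ⟪Eb u, Eb u⟫ := by
      funext u; rw [hVf_def]; simp only [real_inner_self_eq_norm_sq]
    rw [heq]
    refine HasDerivWithinAt.congr_deriv hsum ?_
    rw [hVd_def]
    exact (Vd_identity αi βi (Eα s) (Eβ s) (Eb s) (Ω s) kα kβ lα lβ)
  have hSder : ∀ s ∈ Set.Ici t₀, HasDerivWithinAt Sf (Sd s) (Set.Ici t₀) s := by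
    intro s hs
    obtain ⟨ha, hb, hc⟩ := hsol s hs
    have hca : HasDerivWithinAt (fun u => cross (Eb u) αi) (cross (c' s) αi) (Set.Ici t₀) s := by
      have h := ((crossRL αi).hasFDerivAt).comp_hasDerivWithinAt s hc
      rw [hc'_def]; exact h
    have hcb : HasDerivWithinAt (fun u => cross (Eb u) βi) (cross (c' s) βi) (Set.Ici t₀) s := by
      have h := ((crossRL βi).hasFDerivAt).comp_hasDerivWithinAt s hc
      rw [hc'_def]; exact h
    have h1 := (ha.inner ℝ hca).const_mul lα
    have h2 := (hb.inner ℝ hcb).const_mul lβ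
    simp only [hSf_def, hSd_def]
    exact h1.add h2
  have hWder : ∀ s ∈ Set.Ici t₀, HasDerivWithinAt Wf (Wd s) (Set.Ici t₀) s := by
    intro s hs
    have h := (hVder s hs).sub ((hSder s hs).const_mul ε)
    simp only [hWf_def, hWd_def]
    exact h
  -- V is nonincreasing, giving forward invariance of a small ball
  have hVmono : ∀ s ∈ Set.Ici t₀, Vf s ≤ Vf t₀ := by
    have hbnd : ∀ s ∈ Set.Ici t₀, Vd s ≤ 0 * Vf s := by
      intro s hs
      simp only [hVd_def, zero_mul]
      have h1 : 0 ≤ 2*lα*kα*‖Eα s‖^2 := by positivity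
      have h2 : 0 ≤ 2*lβ*kβ*‖Eβ s‖^2 := by positivity
      linarith only [h1, h2]
    intro s hs
    have := gronwall_ray hVder hbnd s hs
    simpa using this
  have hQ0 : N t₀ ≤ m/M2 := by
    have hsq := pow_le_pow_left₀ (Real.sqrt_nonneg (N t₀)) hinit 2
    rw [Real.sq_sqrt (hN0 t₀), Real.sq_sqrt (div_nonneg hm.le hM2.le)] at hsq
    exact hsq
  have hV0 : Vf t₀ ≤ m := by
    have e1 : lα*‖Eα t₀‖^2 ≤ M2*‖Eα t₀‖^2 := mul_le_mul_of_nonneg_right hM2lα (sq_nonneg _)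
    have e2 : lβ*‖Eβ t₀‖^2 ≤ M2*‖Eβ t₀‖^2 := mul_le_mul_of_nonneg_right hM2lβ (sq_nonneg _)
    have e3 : ‖Eb t₀‖^2 ≤ M2*‖Eb t₀‖^2 := by
      have h := mul_le_mul_of_nonneg_right hM21 (sq_nonneg ‖Eb t₀‖); linarith only [h]
    have h1 : Vf t₀ ≤ M2 * N t₀ := by
      simp only [hVf_def, hN_def]; rw [mul_add, mul_add]; linarith only [e1, e2, e3]
    have h2 : M2 * N t₀ ≤ M2 * (m/M2) := mul_le_mul_of_nonneg_left hQ0 hM2.le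
    have h3 : M2 * (m/M2) = m := by field_simp
    linarith only [h1, h2, h3]
  have hreg : ∀ s ∈ Set.Ici t₀, ‖Eα s‖ ≤ 1 ∧ ‖Eβ s‖ ≤ 1 ∧ ‖Eb s‖ ≤ 1 := by
    intro s hs
    have hVs : Vf s ≤ m := (hVmono s hs).trans hV0
    simp only [hVf_def] at hVs
    have q1 := sq_nonneg ‖Eα s‖; have q2 := sq_nonneg ‖Eβ s‖; have q3 := sq_nonneg ‖Eb s‖
    have n1 := norm_nonneg (Eα s); have n2 := norm_nonneg (Eβ s); have n3 := norm_nonneg (Eb s)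
    have q1' := mul_nonneg hlα.le q1
    have q2' := mul_nonneg hlβ.le q2
    refine ⟨?_, ?_, ?_⟩
    · have hx2 : ‖Eα s‖^2 ≤ 1 := by
        have h : lα*‖Eα s‖^2 ≤ lα*1 := by linarith only [hVs, hmlα, q2', q3]
        exact le_of_mul_le_mul_left h hlα
      exact (pow_le_one_iff_of_nonneg n1 two_ne_zero).1 hx2
    · have hy2 : ‖Eβ s‖^2 ≤ 1 := by
        have h : lβ*‖Eβ s‖^2 ≤ lβ*1 := by linarith only [hVs, hmlβ, q1', q3]
        exact le_of_mul_le_mul_left h hlβ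
      exact (pow_le_one_iff_of_nonneg n2 two_ne_zero).1 hy2
    · have hz2 : ‖Eb s‖^2 ≤ 1 := by linarith only [hVs, hm1, q1', q2']
      exact (pow_le_one_iff_of_nonneg n3 two_ne_zero).1 hz2
  -- pointwise comparison of W with the squared norm
  have hWlow : ∀ s, a1 * N s ≤ Wf s ∧ Wf s ≤ a2 * N s := by
    intro s
    have hx0 : (0:ℝ) ≤ ‖Eα s‖ := norm_nonneg _
    have hy0 : (0:ℝ) ≤ ‖Eβ s‖ := norm_nonneg _
    have hz0 : (0:ℝ) ≤ ‖Eb s‖ := norm_nonneg _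
    have hs1 : |⟪Eα s, cross (Eb s) αi⟫| ≤ ‖Eα s‖*(‖Eb s‖*‖αi‖) :=
      (abs_real_inner_le_norm _ _).trans
        (mul_le_mul_of_nonneg_left (norm_cross_le _ _) hx0)
    have hs2 : |⟪Eβ s, cross (Eb s) βi⟫| ≤ ‖Eβ s‖*(‖Eb s‖*‖βi‖) :=
      (abs_real_inner_le_norm _ _).trans
        (mul_le_mul_of_nonneg_left (norm_cross_le _ _) hy0)
    have hSabs : |Sf s| ≤ M * N s := by
      simp only [hSf_def, hN_def, hM_def]
      have h1 := abs_le.1 hs1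
      have h2 := abs_le.1 hs2
      have u1 : 0 ≤ (lα*‖αi‖)*((‖Eα s‖-‖Eb s‖)^2) := by positivity
      have u2 : 0 ≤ (lβ*‖βi‖)*((‖Eβ s‖-‖Eb s‖)^2) := by positivity
      have u3 : 0 ≤ (lα*‖αi‖)*(‖Eα s‖^2) := by positivity
      have u4 : 0 ≤ (lα*‖αi‖)*(‖Eb s‖^2) := by positivity
      have u10 : 0 ≤ (lβ*‖βi‖)*(‖Eβ s‖^2) := by positivity
      have u11 : 0 ≤ (lβ*‖βi‖)*(‖Eb s‖^2) := by positivity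
      have u5 : 0 ≤ (lα*‖αi‖)*(‖Eβ s‖^2) := by positivity
      have u6 : 0 ≤ (lβ*‖βi‖)*(‖Eα s‖^2) := by positivity
      have u7 : 0 ≤ ‖Eα s‖^2 := sq_nonneg _
      have u8 : 0 ≤ ‖Eβ s‖^2 := sq_nonneg _
      have u9 : 0 ≤ ‖Eb s‖^2 := sq_nonneg _
      rw [abs_le]
      constructor
      · linarith only [mul_le_mul_of_nonneg_left h1.1 hlα.le,
          mul_le_mul_of_nonneg_left h2.1 hlβ.le, u1, u2, u3, u4, u5, u6, u7, u8, u9, u10, u11]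
      · linarith only [mul_le_mul_of_nonneg_left h1.2 hlα.le,
          mul_le_mul_of_nonneg_left h2.2 hlβ.le, u1, u2, u3, u4, u5, u6, u7, u8, u9, u10, u11]
    have habs2 : |ε * Sf s| ≤ (m/2) * N s := by
      rw [abs_mul, abs_of_pos hε]
      have h1 : ε * |Sf s| ≤ ε * (M * N s) := mul_le_mul_of_nonneg_left hSabs hε.le
      have h2 : (ε * M) * N s ≤ (m/2) * N s :=
        mul_le_mul_of_nonneg_right (by linarith only [hεM]) (hN0 s)
      calc ε * |Sf s| ≤ ε * (M * N s) := h1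
        _ = (ε * M) * N s := by ring
        _ ≤ (m/2) * N s := h2
    have hS1 := abs_le.1 habs2
    have hV1 : m * N s ≤ Vf s := by
      simp only [hVf_def, hN_def]
      have e1 : m*‖Eα s‖^2 ≤ lα*‖Eα s‖^2 := mul_le_mul_of_nonneg_right hmlα (sq_nonneg _)
      have e2 : m*‖Eβ s‖^2 ≤ lβ*‖Eβ s‖^2 := mul_le_mul_of_nonneg_right hmlβ (sq_nonneg _)
      have e3 : m*‖Eb s‖^2 ≤ ‖Eb s‖^2 := by
        have h := mul_le_mul_of_nonneg_right hm1 (sq_nonneg ‖Eb s‖); linarith only [h]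
      rw [mul_add, mul_add]; linarith only [e1, e2, e3]
    have hV2 : Vf s ≤ M2 * N s := by
      simp only [hVf_def, hN_def]
      have e1 : lα*‖Eα s‖^2 ≤ M2*‖Eα s‖^2 := mul_le_mul_of_nonneg_right hM2lα (sq_nonneg _)
      have e2 : lβ*‖Eβ s‖^2 ≤ M2*‖Eβ s‖^2 := mul_le_mul_of_nonneg_right hM2lβ (sq_nonneg _)
      have e3 : ‖Eb s‖^2 ≤ M2*‖Eb s‖^2 := by
        have h := mul_le_mul_of_nonneg_right hM21 (sq_nonneg ‖Eb s‖); linarith only [h]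
      rw [mul_add, mul_add]; linarith only [e1, e2, e3]
    constructor
    · simp only [hWf_def, ha1_def]
      linarith only [hS1.2, hV1]
    · simp only [hWf_def, ha2_def]
      linarith only [hS1.1, hV2]
  -- the key differential inequality
  have hkey : ∀ s ∈ Set.Ici t₀, Wd s ≤ -K2 * Wf s := by
    intro s hs
    obtain ⟨hx1, hy1, hz1⟩ := hreg s hs
    have hx0 : (0:ℝ) ≤ ‖Eα s‖ := norm_nonneg _
    have hy0 : (0:ℝ) ≤ ‖Eβ s‖ := norm_nonneg _
    have hz0 : (0:ℝ) ≤ ‖Eb s‖ := norm_nonneg _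
    have hc'n : ‖c' s‖ ≤ cω*‖Eb s‖ + lα*(‖Eα s‖*‖αi‖) + lβ*(‖Eβ s‖*‖βi‖) := by
      have e1 : ‖cross (Ω s) (Eb s)‖ ≤ cω * ‖Eb s‖ :=
        (norm_cross_le _ _).trans (mul_le_mul_of_nonneg_right (hΩb s) (norm_nonneg _))
      have e2 : ‖lα • cross (Eα s) αi‖ ≤ lα*(‖Eα s‖*‖αi‖) := by
        rw [norm_smul, Real.norm_eq_abs, abs_of_pos hlα]
        exact mul_le_mul_of_nonneg_left (norm_cross_le _ _) hlα.le
      have e3 : ‖lβ • cross (Eβ s) βi‖ ≤ lβ*(‖Eβ s‖*‖βi‖) := by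
        rw [norm_smul, Real.norm_eq_abs, abs_of_pos hlβ]
        exact mul_le_mul_of_nonneg_left (norm_cross_le _ _) hlβ.le
      calc ‖c' s‖ ≤ ‖cross (Ω s) (Eb s)‖ + ‖lα • cross (Eα s) αi‖ + ‖lβ • cross (Eβ s) βi‖ := by
            simp only [hc'_def]; exact norm_add₃_le
        _ ≤ _ := by linarith only [e1, e2, e3]
    -- split of the a' and b' directions
    have hsplitα : cross (Eb s) (αi + Eα s) - kα • Eα s
        = cross (Eb s) αi + (cross (Eb s) (Eα s) - kα • Eα s) := by
      rw [cross_add_right]; abel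
    have hsplitβ : cross (Eb s) (βi + Eβ s) - kβ • Eβ s
        = cross (Eb s) βi + (cross (Eb s) (Eβ s) - kβ • Eβ s) := by
      rw [cross_add_right]; abel
    have hSdα : ⟪cross (Eb s) (αi + Eα s) - kα • Eα s, cross (Eb s) αi⟫
        = ‖cross (Eb s) αi‖^2 + ⟪cross (Eb s) (Eα s) - kα • Eα s, cross (Eb s) αi⟫ := by
      rw [hsplitα, inner_add_left, real_inner_self_eq_norm_sq]
    have hSdβ : ⟪cross (Eb s) (βi + Eβ s) - kβ • Eβ s, cross (Eb s) βi⟫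
        = ‖cross (Eb s) βi‖^2 + ⟪cross (Eb s) (Eβ s) - kβ • Eβ s, cross (Eb s) βi⟫ := by
      rw [hsplitβ, inner_add_left, real_inner_self_eq_norm_sq]
    -- lower bounds on the four inner products
    have gα1 : -(‖Eα s‖*((cω*‖Eb s‖ + lα*(‖Eα s‖*‖αi‖) + lβ*(‖Eβ s‖*‖βi‖))*‖αi‖))
        ≤ ⟪Eα s, cross (c' s) αi⟫ := by
      have h1 : ‖cross (c' s) αi‖ ≤ ‖c' s‖ * ‖αi‖ := norm_cross_le _ _
      have h2 : ‖c' s‖ * ‖αi‖ ≤ (cω*‖Eb s‖ + lα*(‖Eα s‖*‖αi‖) + lβ*(‖Eβ s‖*‖βi‖))*‖αi‖ :=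
        mul_le_mul_of_nonneg_right hc'n hA
      have h3 : ‖Eα s‖*‖cross (c' s) αi‖
          ≤ ‖Eα s‖*((cω*‖Eb s‖ + lα*(‖Eα s‖*‖αi‖) + lβ*(‖Eβ s‖*‖βi‖))*‖αi‖) :=
        mul_le_mul_of_nonneg_left (h1.trans h2) hx0
      linarith only [h3, inner_ge (Eα s) (cross (c' s) αi)]
    have gβ1 : -(‖Eβ s‖*((cω*‖Eb s‖ + lα*(‖Eα s‖*‖αi‖) + lβ*(‖Eβ s‖*‖βi‖))*‖βi‖))
        ≤ ⟪Eβ s, cross (c' s) βi⟫ := by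
      have h1 : ‖cross (c' s) βi‖ ≤ ‖c' s‖ * ‖βi‖ := norm_cross_le _ _
      have h2 : ‖c' s‖ * ‖βi‖ ≤ (cω*‖Eb s‖ + lα*(‖Eα s‖*‖αi‖) + lβ*(‖Eβ s‖*‖βi‖))*‖βi‖ :=
        mul_le_mul_of_nonneg_right hc'n hB
      have h3 : ‖Eβ s‖*‖cross (c' s) βi‖
          ≤ ‖Eβ s‖*((cω*‖Eb s‖ + lα*(‖Eα s‖*‖αi‖) + lβ*(‖Eβ s‖*‖βi‖))*‖βi‖) :=
        mul_le_mul_of_nonneg_left (h1.trans h2) hy0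
      linarith only [h3, inner_ge (Eβ s) (cross (c' s) βi)]
    have gα2 : -((‖Eb s‖*‖Eα s‖ + kα*‖Eα s‖)*(‖Eb s‖*‖αi‖))
        ≤ ⟪cross (Eb s) (Eα s) - kα • Eα s, cross (Eb s) αi⟫ := by
      have hn : ‖cross (Eb s) (Eα s) - kα • Eα s‖ ≤ ‖Eb s‖*‖Eα s‖ + kα*‖Eα s‖ := by
        refine (norm_sub_le _ _).trans ?_
        have h1 := norm_cross_le (Eb s) (Eα s)
        rw [norm_smul, Real.norm_eq_abs, abs_of_pos hkα]
        linarith only [h1]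
      have h2 : ‖cross (Eb s) (Eα s) - kα • Eα s‖*‖cross (Eb s) αi‖
          ≤ (‖Eb s‖*‖Eα s‖ + kα*‖Eα s‖)*(‖Eb s‖*‖αi‖) :=
        mul_le_mul hn (norm_cross_le _ _) (norm_nonneg _) (by positivity)
      linarith only [h2, inner_ge (cross (Eb s) (Eα s) - kα • Eα s) (cross (Eb s) αi)]
    have gβ2 : -((‖Eb s‖*‖Eβ s‖ + kβ*‖Eβ s‖)*(‖Eb s‖*‖βi‖))
        ≤ ⟪cross (Eb s) (Eβ s) - kβ • Eβ s, cross (Eb s) βi⟫ := by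
      have hn : ‖cross (Eb s) (Eβ s) - kβ • Eβ s‖ ≤ ‖Eb s‖*‖Eβ s‖ + kβ*‖Eβ s‖ := by
        refine (norm_sub_le _ _).trans ?_
        have h1 := norm_cross_le (Eb s) (Eβ s)
        rw [norm_smul, Real.norm_eq_abs, abs_of_pos hkβ]
        linarith only [h1]
      have h2 : ‖cross (Eb s) (Eβ s) - kβ • Eβ s‖*‖cross (Eb s) βi‖
          ≤ (‖Eb s‖*‖Eβ s‖ + kβ*‖Eβ s‖)*(‖Eb s‖*‖βi‖) :=
        mul_le_mul hn (norm_cross_le _ _) (norm_nonneg _) (by positivity)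
      linarith only [h2, inner_ge (cross (Eb s) (Eβ s) - kβ • Eβ s) (cross (Eb s) βi)]
    -- lower bound for Sd
    have hSdlow : lα*‖cross (Eb s) αi‖^2 + lβ*‖cross (Eb s) βi‖^2
        - (K*(‖Eα s‖*‖Eb s‖ + ‖Eβ s‖*‖Eb s‖) + K*(‖Eα s‖^2 + ‖Eβ s‖^2)) ≤ Sd s := by
      simp only [hSd_def]
      rw [hSdα, hSdβ]
      have hsc := sdlow_scalar kα kβ lα lβ cω ‖αi‖ ‖βi‖ K ‖Eα s‖ ‖Eβ s‖ ‖Eb s‖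
        _ _ _ _ hkα hkβ hlα hlβ hcω hA hB hx0 hy0 hz0 hz1 hK_def gα1 gα2 gβ1 gβ2
      linarith only [hsc]
    -- the decay bound on Wd
    have hWdlow : Wd s ≤ -μ * N s := by
      simp only [hWd_def, hVd_def, hN_def]
      have hsc := wd_scalar lα lβ kα kβ c0 K ε μ ‖Eα s‖ ‖Eβ s‖ ‖Eb s‖
        (lα*‖cross (Eb s) αi‖^2 + lβ*‖cross (Eb s) βi‖^2) (Sd s)
        hc0 hK0 hε hεa1 hεa2 hμ1 hμ2 hμ3 hx0 hy0 hz0 (hc0b (Eb s)) hSdlow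
      linarith only [hsc]
    have hWhigh := (hWlow s).2
    have h1 : K2 * Wf s ≤ K2 * (a2 * N s) := mul_le_mul_of_nonneg_left hWhigh hK2.le
    have hK2a : K2 * a2 = μ := by rw [hK2_def]; exact div_mul_cancel₀ _ ha2.ne'
    have h2 : K2 * (a2 * N s) = μ * N s := by rw [← hK2a]; ring
    linarith only [hWdlow, h1, h2]
  -- Grönwall for W
  have hWexp := gronwall_ray (K := -K2) hWder hkey t ht
  have hlow_t := (hWlow t).1
  have hhigh_0 := (hWlow t₀).2
  have hexp : (0:ℝ) < Real.exp (-K2*(t-t₀)) := Real.exp_pos _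
  have hQt : a1 * N t ≤ a2 * N t₀ * Real.exp (-K2*(t-t₀)) := by
    have h2 : Wf t₀ * Real.exp (-K2*(t-t₀)) ≤ (a2 * N t₀) * Real.exp (-K2*(t-t₀)) :=
      mul_le_mul_of_nonneg_right hhigh_0 hexp.le
    linarith only [hWexp, hlow_t, h2]
  have hE2 : Real.exp (-(K2/2)*(t-t₀))^2 = Real.exp (-K2*(t-t₀)) := by
    rw [sq, ← Real.exp_add]; congr 1; ring
  have hrhs2 : (Real.sqrt (a2/a1) * Real.exp (-(K2/2)*(t-t₀)) * Real.sqrt (N t₀))^2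
      = (a2/a1) * Real.exp (-K2*(t-t₀)) * N t₀ := by
    rw [mul_pow, mul_pow, Real.sq_sqrt (by positivity : (0:ℝ) ≤ a2/a1),
      Real.sq_sqrt (hN0 t₀), hE2]
  have hsq : N t ≤ (a2/a1)*Real.exp (-K2*(t-t₀))*N t₀ := by
    rw [div_mul_eq_mul_div, div_mul_eq_mul_div, le_div_iff₀ ha1]
    linarith only [hQt]
  have h0 : 0 ≤ Real.sqrt (a2/a1) * Real.exp (-(K2/2)*(t-t₀)) * Real.sqrt (N t₀) := by
    positivity
  calc Real.sqrt (N t) ≤ Real.sqrt ((a2/a1)*Real.exp (-K2*(t-t₀))*N t₀) :=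
        Real.sqrt_le_sqrt hsq
    _ = Real.sqrt (a2/a1) * Real.exp (-(K2/2)*(t-t₀)) * Real.sqrt (N t₀) := by
        rw [← hrhs2, Real.sqrt_sq h0]
end
end

section
/- Let α_i, β_i ∈ ℝ³, k_α, k_β, l_α, l_β > 0, c_ω ≥ 0 and ε > 0. Then for all E_α, E_β, E_b ∈ ℝ³ and all Ω ∈ ℝ³ with ‖Ω‖ ≤ c_ω, with u := (l_α/k_α) α_i × E_α + (l_β/k_β) β_i × E_β and D as defined from the error system: |⟨u, D⟩| ≤ (ε/2)‖E_b‖² + (2 c_ω²/ε)‖u‖² + (4/ε)((l_α²/k_α²)‖α_i‖⁴ + (l_β²/k_β²)‖β_i‖⁴)‖u‖² + (2 l_α² ‖α_i‖²/(ε k_α²))‖E_α‖² ‖u‖² + (2 l_β² ‖β_i‖²/(ε k_β²))‖E_β‖² ‖u‖². -/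
open scoped RealInnerProductSpace
open Matrix Filter

noncomputable section

/-- The skew-symmetric matrix `v_×` with `v_× x = v × x`. -/
def skew (v : V3) : Matrix (Fin 3) (Fin 3) ℝ :=
  !![0, -(toF v 2), toF v 1; toF v 2, 0, -(toF v 0); -(toF v 1), toF v 0, 0]

/-- Matrix-vector multiplication on `V3`. -/
def mulVecE (M : Matrix (Fin 3) (Fin 3) ℝ) (x : V3) : V3 := toE (M.mulVec (toF x))

/-- The quadratic part of the Lyapunov function,
`V₁ = (1/2)(lα‖Eα‖² + lβ‖Eβ‖² + ‖Eb‖²)`. -/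
def V1 (lα lβ : ℝ) (Eα Eβ Eb : V3) : ℝ :=
  (1 / 2) * (lα * ‖Eα‖ ^ 2 + lβ * ‖Eβ‖ ^ 2 + ‖Eb‖ ^ 2)

/-- `u_{αβ} = (lα/kα) αi × Eα + (lβ/kβ) βi × Eβ`. -/
def uab (αi βi : V3) (kα kβ lα lβ : ℝ) (Eα Eβ : V3) : V3 :=
  (lα / kα) • cross αi Eα + (lβ / kβ) • cross βi Eβ

/-- `D`, the time derivative of `Eb − u_{αβ}` along the error system. -/
def Dvec (αi βi : V3) (kα kβ lα lβ : ℝ) (Eα Eβ Eb Ω : V3) : V3 :=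
  (cross Ω Eb + lα • cross Eα αi + lβ • cross Eβ βi)
    - (lα / kα) • cross αi (cross Eb (αi + Eα) - kα • Eα)
    - (lβ / kβ) • cross βi (cross Eb (βi + Eβ) - kβ • Eβ)


lemma norm_sq_V3 (v : V3) : ‖v‖ ^ 2 = v 0 ^ 2 + v 1 ^ 2 + v 2 ^ 2 := by
  rw [EuclideanSpace.norm_eq, Real.sq_sqrt (by positivity), Fin.sum_univ_three]
  simp [Real.norm_eq_abs, sq_abs]

lemma cross_norm_le (v w : V3) : ‖cross v w‖ ≤ ‖v‖ * ‖w‖ := by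
  have h2 : ‖cross v w‖ ^ 2 ≤ (‖v‖ * ‖w‖) ^ 2 := by
    rw [mul_pow, norm_sq_V3, norm_sq_V3, norm_sq_V3]
    simp only [cross, toE, toF, cross_apply]
    simp only [Matrix.cons_val_zero, Matrix.cons_val_one, Matrix.head_cons,
      Matrix.cons_val_two, Matrix.tail_cons]
    nlinarith [sq_nonneg (v 0 * w 0 + v 1 * w 1 + v 2 * w 2)]
  exact le_of_pow_le_pow_left₀ two_ne_zero (by positivity) h2

lemma inner_cross_le (u a b : V3) : |⟪u, cross a b⟫| ≤ ‖u‖ * ‖a‖ * ‖b‖ := by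
  calc |⟪u, cross a b⟫| ≤ ‖u‖ * ‖cross a b‖ := abs_real_inner_le_norm _ _
    _ ≤ ‖u‖ * (‖a‖ * ‖b‖) := by gcongr; exact cross_norm_le a b
    _ = ‖u‖ * ‖a‖ * ‖b‖ := by ring

lemma inner_cross_cross_le (u a b c : V3) :
    |⟪u, cross a (cross b c)⟫| ≤ ‖u‖ * ‖a‖ * ‖b‖ * ‖c‖ := by
  calc |⟪u, cross a (cross b c)⟫| ≤ ‖u‖ * ‖a‖ * ‖cross b c‖ := inner_cross_le _ _ _
    _ ≤ ‖u‖ * ‖a‖ * (‖b‖ * ‖c‖) :=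
        mul_le_mul_of_nonneg_left (cross_norm_le b c) (by positivity)
    _ = ‖u‖ * ‖a‖ * ‖b‖ * ‖c‖ := by ring

lemma tri_abs (a b c d e p q : ℝ) (hp : 0 ≤ p) (hq : 0 ≤ q) :
    |a - p * (b + c) - q * (d + e)| ≤ |a| + p * (|b| + |c|) + q * (|d| + |e|) := by
  calc |a - p * (b + c) - q * (d + e)|
      ≤ |a - p * (b + c)| + |q * (d + e)| := abs_sub _ _
    _ ≤ |a| + |p * (b + c)| + |q * (d + e)| := by gcongr; exact abs_sub _ _
    _ ≤ |a| + p * (|b| + |c|) + q * (|d| + |e|) := by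
        rw [abs_mul, abs_mul, abs_of_nonneg hp, abs_of_nonneg hq]
        gcongr <;> exact abs_add_le _ _

lemma Dvec_eq (αi βi : V3) (kα kβ lα lβ : ℝ) (hkα : kα ≠ 0) (hkβ : kβ ≠ 0)
    (Eα Eβ Eb Ω : V3) :
    Dvec αi βi kα kβ lα lβ Eα Eβ Eb Ω
      = cross Ω Eb - (lα / kα) • (cross αi (cross Eb αi) + cross αi (cross Eb Eα))
        - (lβ / kβ) • (cross βi (cross Eb βi) + cross βi (cross Eb Eβ)) := by
  ext i
  fin_cases i <;>
    · simp only [Dvec, cross, toE, toF, cross_apply, PiLp.add_apply, PiLp.sub_apply,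
        PiLp.smul_apply, smul_eq_mul, Pi.add_apply, Pi.sub_apply, Pi.smul_apply,
        Matrix.cons_val_zero, Matrix.cons_val_one, Matrix.head_cons,
        Matrix.cons_val_two, Matrix.tail_cons, Fin.reduceFinMk, Fin.isValue]
      field_simp
      ring

set_option maxHeartbeats 2000000 in
/-- Bound on `|⟨u, D⟩|` obtained from Young's inequality. -/
theorem abs_inner_u_D_bound
    (αi βi : V3) (kα kβ lα lβ : ℝ)
    (hkα : 0 < kα) (hkβ : 0 < kβ) (hlα : 0 < lα) (hlβ : 0 < lβ)
    (cω : ℝ) (hcω : 0 ≤ cω) (ε : ℝ) (hε : 0 < ε) :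
    ∀ Eα Eβ Eb Ω : V3, ‖Ω‖ ≤ cω →
      |⟪uab αi βi kα kβ lα lβ Eα Eβ, Dvec αi βi kα kβ lα lβ Eα Eβ Eb Ω⟫|
        ≤ (ε / 2) * ‖Eb‖ ^ 2
          + (2 * cω ^ 2 / ε) * ‖uab αi βi kα kβ lα lβ Eα Eβ‖ ^ 2
          + (4 / ε) * ((lα ^ 2 / kα ^ 2) * ‖αi‖ ^ 4 + (lβ ^ 2 / kβ ^ 2) * ‖βi‖ ^ 4)
              * ‖uab αi βi kα kβ lα lβ Eα Eβ‖ ^ 2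
          + (2 * lα ^ 2 * ‖αi‖ ^ 2 / (ε * kα ^ 2)) * ‖Eα‖ ^ 2
              * ‖uab αi βi kα kβ lα lβ Eα Eβ‖ ^ 2
          + (2 * lβ ^ 2 * ‖βi‖ ^ 2 / (ε * kβ ^ 2)) * ‖Eβ‖ ^ 2
              * ‖uab αi βi kα kβ lα lβ Eα Eβ‖ ^ 2 := by
  intro Eα Eβ Eb Ω hΩ
  have hkα' : kα ≠ 0 := hkα.ne'
  have hkβ' : kβ ≠ 0 := hkβ.ne'
  have hε' : ε ≠ 0 := hε.ne'
  set u : V3 := uab αi βi kα kβ lα lβ Eα Eβ with hu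
  set U := ‖u‖ with hU
  set B := ‖Eb‖ with hB
  set A := ‖αi‖ with hA
  set Bi := ‖βi‖ with hBi
  set EA := ‖Eα‖ with hEA
  set EB := ‖Eβ‖ with hEB
  have hU0 : 0 ≤ U := norm_nonneg _
  have hB0 : 0 ≤ B := norm_nonneg _
  have hA0 : 0 ≤ A := norm_nonneg _
  have hBi0 : 0 ≤ Bi := norm_nonneg _
  have hEA0 : 0 ≤ EA := norm_nonneg _
  have hEB0 : 0 ≤ EB := norm_nonneg _
  have cα0 : 0 ≤ lα / kα := le_of_lt (div_pos hlα hkα)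
  have cβ0 : 0 ≤ lβ / kβ := le_of_lt (div_pos hlβ hkβ)
  -- bound the inner product by a sum of five products
  have h1 : |⟪u, cross Ω Eb⟫| ≤ cω * U * B := by
    calc |⟪u, cross Ω Eb⟫| ≤ ‖u‖ * ‖Ω‖ * ‖Eb‖ := inner_cross_le _ _ _
      _ ≤ ‖u‖ * cω * ‖Eb‖ := by gcongr
      _ = cω * U * B := by ring
  have h2 : |⟪u, cross αi (cross Eb αi)⟫| ≤ U * A * B * A := inner_cross_cross_le _ _ _ _
  have h3 : |⟪u, cross αi (cross Eb Eα)⟫| ≤ U * A * B * EA := inner_cross_cross_le _ _ _ _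
  have h4 : |⟪u, cross βi (cross Eb βi)⟫| ≤ U * Bi * B * Bi := inner_cross_cross_le _ _ _ _
  have h5 : |⟪u, cross βi (cross Eb Eβ)⟫| ≤ U * Bi * B * EB := inner_cross_cross_le _ _ _ _
  have hsum : |⟪u, Dvec αi βi kα kβ lα lβ Eα Eβ Eb Ω⟫|
      ≤ cω * U * B + (lα / kα) * (U * A * B * A) + (lα / kα) * (U * A * B * EA)
        + (lβ / kβ) * (U * Bi * B * Bi) + (lβ / kβ) * (U * Bi * B * EB) := by
    have hsplit : ⟪u, Dvec αi βi kα kβ lα lβ Eα Eβ Eb Ω⟫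
        = ⟪u, cross Ω Eb⟫
          - (lα / kα) * (⟪u, cross αi (cross Eb αi)⟫ + ⟪u, cross αi (cross Eb Eα)⟫)
          - (lβ / kβ) * (⟪u, cross βi (cross Eb βi)⟫ + ⟪u, cross βi (cross Eb Eβ)⟫) := by
      rw [Dvec_eq αi βi kα kβ lα lβ hkα' hkβ' Eα Eβ Eb Ω]
      rw [inner_sub_right, inner_sub_right, real_inner_smul_right, real_inner_smul_right,
        inner_add_right, inner_add_right]
    rw [hsplit]
    refine le_trans (tri_abs _ _ _ _ _ _ _ cα0 cβ0) ?_
    have b2 : (lα / kα) * (|⟪u, cross αi (cross Eb αi)⟫| + |⟪u, cross αi (cross Eb Eα)⟫|)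
        ≤ (lα / kα) * (U * A * B * A + U * A * B * EA) :=
      mul_le_mul_of_nonneg_left (add_le_add h2 h3) cα0
    have b3 : (lβ / kβ) * (|⟪u, cross βi (cross Eb βi)⟫| + |⟪u, cross βi (cross Eb Eβ)⟫|)
        ≤ (lβ / kβ) * (U * Bi * B * Bi + U * Bi * B * EB) :=
      mul_le_mul_of_nonneg_left (add_le_add h4 h5) cβ0
    linarith [h1, b2, b3]
  -- Young's inequality on each term
  have y1 : cω * U * B ≤ ε / 8 * B ^ 2 + 2 * cω ^ 2 / ε * U ^ 2 := by
    have key : ε / 8 * B ^ 2 + 2 * cω ^ 2 / ε * U ^ 2 - cω * U * B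
        = (ε * B - 4 * cω * U) ^ 2 / (8 * ε) := by field_simp; ring
    linarith [key, div_nonneg (sq_nonneg (ε * B - 4 * cω * U)) (by positivity : (0:ℝ) ≤ 8 * ε)]
  have y2 : (lα / kα) * (U * A * B * A)
      ≤ ε / 16 * B ^ 2 + 4 * lα ^ 2 * A ^ 4 / (ε * kα ^ 2) * U ^ 2 := by
    have key : ε / 16 * B ^ 2 + 4 * lα ^ 2 * A ^ 4 / (ε * kα ^ 2) * U ^ 2
          - (lα / kα) * (U * A * B * A)
        = (ε * B - 8 * (lα / kα) * A ^ 2 * U) ^ 2 / (16 * ε) := by field_simp; ring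
    linarith [key, div_nonneg (sq_nonneg (ε * B - 8 * (lα / kα) * A ^ 2 * U))
      (by positivity : (0:ℝ) ≤ 16 * ε)]
  have y3 : (lα / kα) * (U * A * B * EA)
      ≤ ε / 8 * B ^ 2 + 2 * lα ^ 2 * A ^ 2 / (ε * kα ^ 2) * EA ^ 2 * U ^ 2 := by
    have key : ε / 8 * B ^ 2 + 2 * lα ^ 2 * A ^ 2 / (ε * kα ^ 2) * EA ^ 2 * U ^ 2
          - (lα / kα) * (U * A * B * EA)
        = (ε * B - 4 * (lα / kα) * A * EA * U) ^ 2 / (8 * ε) := by field_simp; ring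
    linarith [key, div_nonneg (sq_nonneg (ε * B - 4 * (lα / kα) * A * EA * U))
      (by positivity : (0:ℝ) ≤ 8 * ε)]
  have y4 : (lβ / kβ) * (U * Bi * B * Bi)
      ≤ ε / 16 * B ^ 2 + 4 * lβ ^ 2 * Bi ^ 4 / (ε * kβ ^ 2) * U ^ 2 := by
    have key : ε / 16 * B ^ 2 + 4 * lβ ^ 2 * Bi ^ 4 / (ε * kβ ^ 2) * U ^ 2
          - (lβ / kβ) * (U * Bi * B * Bi)
        = (ε * B - 8 * (lβ / kβ) * Bi ^ 2 * U) ^ 2 / (16 * ε) := by field_simp; ring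
    linarith [key, div_nonneg (sq_nonneg (ε * B - 8 * (lβ / kβ) * Bi ^ 2 * U))
      (by positivity : (0:ℝ) ≤ 16 * ε)]
  have y5 : (lβ / kβ) * (U * Bi * B * EB)
      ≤ ε / 8 * B ^ 2 + 2 * lβ ^ 2 * Bi ^ 2 / (ε * kβ ^ 2) * EB ^ 2 * U ^ 2 := by
    have key : ε / 8 * B ^ 2 + 2 * lβ ^ 2 * Bi ^ 2 / (ε * kβ ^ 2) * EB ^ 2 * U ^ 2
          - (lβ / kβ) * (U * Bi * B * EB)
        = (ε * B - 4 * (lβ / kβ) * Bi * EB * U) ^ 2 / (8 * ε) := by field_simp; ring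
    linarith [key, div_nonneg (sq_nonneg (ε * B - 4 * (lβ / kβ) * Bi * EB * U))
      (by positivity : (0:ℝ) ≤ 8 * ε)]
  have hRHS : (ε / 2) * B ^ 2 + (2 * cω ^ 2 / ε) * U ^ 2
        + (4 / ε) * ((lα ^ 2 / kα ^ 2) * A ^ 4 + (lβ ^ 2 / kβ ^ 2) * Bi ^ 4) * U ^ 2
        + (2 * lα ^ 2 * A ^ 2 / (ε * kα ^ 2)) * EA ^ 2 * U ^ 2
        + (2 * lβ ^ 2 * Bi ^ 2 / (ε * kβ ^ 2)) * EB ^ 2 * U ^ 2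
      = (ε / 8 * B ^ 2 + 2 * cω ^ 2 / ε * U ^ 2)
        + (ε / 16 * B ^ 2 + 4 * lα ^ 2 * A ^ 4 / (ε * kα ^ 2) * U ^ 2)
        + (ε / 8 * B ^ 2 + 2 * lα ^ 2 * A ^ 2 / (ε * kα ^ 2) * EA ^ 2 * U ^ 2)
        + (ε / 16 * B ^ 2 + 4 * lβ ^ 2 * Bi ^ 4 / (ε * kβ ^ 2) * U ^ 2)
        + (ε / 8 * B ^ 2 + 2 * lβ ^ 2 * Bi ^ 2 / (ε * kβ ^ 2) * EB ^ 2 * U ^ 2) := by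
    field_simp
    ring
  rw [hRHS]
  linarith [hsum, y1, y2, y3, y4, y5]
end
end
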